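/- If A and B are 2×2 non-negative integer matrices with AB = F^m for some m ≥ 1, where F = [[1,1],[1,0]] is the Fibonacci matrix, then there exist k, l ∈ ℕ ∪ {0} with k + l = m such that either A = F^k and B = F^l, or A = F^k·J and B = J·F^l, where J = [[0,1],[1,0]]. -/
import Mathlib


/-- The Fibonacci matrix. -/
def F : Matrix (Fin 2) (Fin 2) ℤ := !![1, 1; 1, 0]

/-- The flip matrix. -/
def J : Matrix (Fin 2) (Fin 2) ℤ := !![0, 1; 1, 0]

/-- Inverse of F. -/
def Fi : Matrix (Fin 2) (Fin 2) ℤ := !![0, 1; 1, -1]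

/-- Inverse of L = !![1,0;1,1]. -/
def Li : Matrix (Fin 2) (Fin 2) ℤ := !![1, 0; -1, 1]

lemma FiF : Fi * F = 1 := by
  simp [Fi, F, Matrix.mul_fin_two, Matrix.one_fin_two]

lemma JJ : J * (J : Matrix (Fin 2) (Fin 2) ℤ) = 1 := by
  simp [J, Matrix.mul_fin_two, Matrix.one_fin_two]

lemma prodNonneg (A B : Matrix (Fin 2) (Fin 2) ℤ)
    (hA : ∀ i j, 0 ≤ A i j) (hB : ∀ i j, 0 ≤ B i j) :
    ∀ i j, 0 ≤ (A * B) i j := by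
  intro i j
  rw [Matrix.mul_apply]
  exact Finset.sum_nonneg fun k _ => mul_nonneg (hA i k) (hB k j)

lemma Fpow_facts (n : ℕ) :
    (∀ i j, 0 ≤ (F ^ n) i j) ∧ 1 ≤ (F ^ n) 0 0 + (F ^ n) 0 1 ∧
      1 ≤ (F ^ n) 1 0 + (F ^ n) 1 1 := by
  induction n with
  | zero =>
    refine ⟨fun i j => ?_, by simp, by simp⟩
    fin_cases i <;> fin_cases j <;> simp
  | succ n ih =>
    obtain ⟨h1, h2, h3⟩ := ih
    have e : ∀ j, (F ^ (n+1)) 0 j = (F ^ n) 0 j + (F ^ n) 1 j ∧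
        (F ^ (n+1)) 1 j = (F ^ n) 0 j := by
      intro j
      rw [pow_succ']
      constructor <;> simp [F, Matrix.mul_apply, Fin.sum_univ_two]
    refine ⟨fun i j => ?_, ?_, ?_⟩
    · match i with
      | 0 => rw [(e j).1]; exact add_nonneg (h1 0 j) (h1 1 j)
      | 1 => rw [(e j).2]; exact h1 0 j
    · rw [(e 0).1, (e 1).1]
      have := h1 1 0; have := h1 1 1; linarith
    · rw [(e 0).2, (e 1).2]; exact h2

lemma keyLem (a b c d : ℤ) (ha : 0 ≤ a) (hb : 0 ≤ b) (hc : 0 ≤ c) (hd : 0 ≤ d)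
    (hdet : a * d - b * c = 1 ∨ a * d - b * c = -1) :
    (c ≤ a ∧ d ≤ b) ∨ (a ≤ c ∧ b ≤ d) ∨
      (a = 1 ∧ b = 0 ∧ c = 0 ∧ d = 1) ∨ (a = 0 ∧ b = 1 ∧ c = 1 ∧ d = 0) := by
  have hdet1 : a * d - b * c ≤ 1 ∧ -1 ≤ a * d - b * c := by rcases hdet with h | h <;> omega
  rcases le_or_gt b d with h2 | h2
  · rcases le_or_gt a c with h1 | h1
    · exact Or.inr (Or.inl ⟨h1, h2⟩)
    · rcases le_or_gt d b with h3 | h3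
      · exact Or.inl ⟨le_of_lt h1, h3⟩
      · -- c < a, b < d : identity case
        have key : (c + 1) * (b + 1) ≤ a * d :=
          mul_le_mul (by omega) (by omega) (by omega) (by omega)
        have hsum : b + c ≤ 0 := by nlinarith
        have hb0 : b = 0 := by omega
        have hc0 : c = 0 := by omega
        subst hb0; subst hc0
        simp only [mul_zero, zero_mul, sub_zero] at hdet
        have hnn : 0 ≤ a * d := mul_nonneg ha hd
        have had : a * d = 1 := by
          rcases hdet with h | h
          · exact h
          · exfalso; linarith
        exact Or.inr (Or.inr (Or.inl ⟨Int.eq_one_of_mul_eq_one_right ha had, rfl, rfl,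
          Int.eq_one_of_mul_eq_one_left hd had⟩))
  · rcases le_or_gt c a with h1 | h1
    · exact Or.inl ⟨h1, le_of_lt h2⟩
    · -- a < c, d < b : J case
      have key : (a + 1) * (d + 1) ≤ c * b :=
        mul_le_mul (by omega) (by omega) (by omega) (by omega)
      have hsum : a + d ≤ 0 := by nlinarith
      have ha0 : a = 0 := by omega
      have hd0 : d = 0 := by omega
      subst ha0; subst hd0
      simp only [mul_zero, zero_mul, zero_sub] at hdet
      have hnn : 0 ≤ b * c := mul_nonneg hb hc
      have hbc : b * c = 1 := by
        rcases hdet with h | h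
        · exfalso; linarith
        · linarith
      exact Or.inr (Or.inr (Or.inr ⟨rfl, Int.eq_one_of_mul_eq_one_right hb hbc,
        Int.eq_one_of_mul_eq_one_left hc hbc, rfl⟩))

/-- The matrix L. -/
def Lm : Matrix (Fin 2) (Fin 2) ℤ := !![1, 0; 1, 1]

lemma LiL : Li * Lm = 1 := by
  simp [Li, Lm, Matrix.mul_fin_two, Matrix.one_fin_two]

lemma Fpow_succ_entries (n : ℕ) (j : Fin 2) :
    (F ^ (n+1)) 0 j = (F ^ n) 0 j + (F ^ n) 1 j ∧ (F ^ (n+1)) 1 j = (F ^ n) 0 j := by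
  rw [pow_succ']
  constructor <;> simp [F, Matrix.mul_apply, Fin.sum_univ_two]

lemma stripF (A : Matrix (Fin 2) (Fin 2) ℤ) (hA : ∀ i j, 0 ≤ A i j)
    (h1 : A 1 0 ≤ A 0 0) (h2 : A 1 1 ≤ A 0 1) :
    ∃ A', (∀ i j, 0 ≤ A' i j) ∧ A = F * A' := by
  refine ⟨!![A 1 0, A 1 1; A 0 0 - A 1 0, A 0 1 - A 1 1], ?_, ?_⟩
  · intro i j
    have n00 := hA 0 0; have n01 := hA 0 1; have n10 := hA 1 0; have n11 := hA 1 1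
    fin_cases i <;> fin_cases j <;> simp <;> omega
  · ext i j
    fin_cases i <;> fin_cases j <;>
      simp [F, Matrix.mul_apply, Fin.sum_univ_two] <;> ring

lemma stripL (A : Matrix (Fin 2) (Fin 2) ℤ) (hA : ∀ i j, 0 ≤ A i j)
    (h1 : A 0 0 ≤ A 1 0) (h2 : A 0 1 ≤ A 1 1) :
    ∃ A', (∀ i j, 0 ≤ A' i j) ∧ A = Lm * A' := by
  refine ⟨!![A 0 0, A 0 1; A 1 0 - A 0 0, A 1 1 - A 0 1], ?_, ?_⟩
  · intro i j
    have n00 := hA 0 0; have n01 := hA 0 1; have n10 := hA 1 0; have n11 := hA 1 1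
    fin_cases i <;> fin_cases j <;> simp <;> omega
  · ext i j
    fin_cases i <;> fin_cases j <;>
      simp [Lm, Matrix.mul_apply, Fin.sum_univ_two] <;> ring

lemma factor_aux : ∀ m (A B : Matrix (Fin 2) (Fin 2) ℤ),
    (∀ i j, 0 ≤ A i j) → (∀ i j, 0 ≤ B i j) → A * B = F ^ m →
    ∃ k l : ℕ, k + l = m ∧
      ((A = F ^ k ∧ B = F ^ l) ∨ (A = F ^ k * J ∧ B = J * F ^ l)) := by
  intro m
  induction m using Nat.strong_induction_on with
  | _ m ih =>
  intro A B hA hB h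
  -- determinant of A is a unit
  have hdetprod : A.det * B.det = ((-1 : ℤ)) ^ m := by
    have hdF : F.det = -1 := by simp [F, Matrix.det_fin_two_of]
    rw [← Matrix.det_mul, h, Matrix.det_pow, hdF]
  have hunit : IsUnit A.det := by
    apply isUnit_of_mul_isUnit_left (y := B.det)
    rw [hdetprod]
    exact (isUnit_one.neg).pow m
  have hdet : A 0 0 * A 1 1 - A 0 1 * A 1 0 = 1 ∨
      A 0 0 * A 1 1 - A 0 1 * A 1 0 = -1 := by
    rcases Int.isUnit_iff.mp hunit with hu | hu <;>
      [left; right] <;> rw [← Matrix.det_fin_two] <;> exact hu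
  rcases keyLem (A 0 0) (A 0 1) (A 1 0) (A 1 1) (hA 0 0) (hA 0 1) (hA 1 0) (hA 1 1) hdet
    with ⟨h1, h2⟩ | ⟨h1, h2⟩ | ⟨e1, e2, e3, e4⟩ | ⟨e1, e2, e3, e4⟩
  · -- R case: strip an F from the left of A
    obtain ⟨A', hA', hFA⟩ := stripF A hA h1 h2
    have hFA'B : F * (A' * B) = F ^ m := by rw [← Matrix.mul_assoc, ← hFA, h]
    have hA'B : A' * B = Fi * F ^ m := by
      calc A' * B = (Fi * F) * (A' * B) := by rw [FiF, one_mul]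
        _ = Fi * (F * (A' * B)) := by rw [Matrix.mul_assoc]
        _ = Fi * F ^ m := by rw [hFA'B]
    cases m with
    | zero =>
      exfalso
      have hp := prodNonneg A' B hA' hB 1 1
      rw [hA'B, pow_zero, mul_one] at hp
      simp [Fi] at hp
    | succ n =>
      have hFiFn : Fi * F ^ (n+1) = F ^ n := by
        rw [pow_succ', ← Matrix.mul_assoc, FiF, one_mul]
      rw [hFiFn] at hA'B
      obtain ⟨k, l, hkl, hc⟩ := ih n (by omega) A' B hA' hB hA'B
      refine ⟨k + 1, l, by omega, ?_⟩
      rcases hc with ⟨hak, hbl⟩ | ⟨hak, hbl⟩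
      · exact Or.inl ⟨by rw [hFA, hak, ← pow_succ'], hbl⟩
      · exact Or.inr ⟨by rw [hFA, hak, ← Matrix.mul_assoc, ← pow_succ'], hbl⟩
  · -- L case: impossible
    exfalso
    obtain ⟨A', hA', hLA⟩ := stripL A hA h1 h2
    have hLA'B : Lm * (A' * B) = F ^ m := by rw [← Matrix.mul_assoc, ← hLA, h]
    have hA'B : A' * B = Li * F ^ m := by
      calc A' * B = (Li * Lm) * (A' * B) := by rw [LiL, one_mul]
        _ = Li * (Lm * (A' * B)) := by rw [Matrix.mul_assoc]
        _ = Li * F ^ m := by rw [hLA'B]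
    cases m with
    | zero =>
      have hp := prodNonneg A' B hA' hB 1 0
      rw [hA'B, pow_zero, mul_one] at hp
      simp [Li] at hp
    | succ n =>
      have q : ∀ j, (Li * F ^ (n+1)) 1 j = -((F ^ n) 1 j) := by
        intro j
        obtain ⟨q1, q2⟩ := Fpow_succ_entries n j
        have : (Li * F ^ (n+1)) 1 j = -((F ^ (n+1)) 0 j) + (F ^ (n+1)) 1 j := by
          simp [Li, Matrix.mul_apply, Fin.sum_univ_two]
        rw [this, q1, q2]; ring
      have p0 := prodNonneg A' B hA' hB 1 0
      have p1 := prodNonneg A' B hA' hB 1 1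
      rw [hA'B, q 0] at p0
      rw [hA'B, q 1] at p1
      have := (Fpow_facts n).2.2
      linarith
  · -- A = 1
    have hA1 : A = 1 := by
      ext i j
      fin_cases i <;> fin_cases j <;>
        simp [Matrix.one_apply] <;> omega
    refine ⟨0, m, by omega, Or.inl ⟨by rw [pow_zero, hA1], ?_⟩⟩
    rw [← h, hA1, one_mul]
  · -- A = J
    have hAJ : A = J := by
      ext i j
      fin_cases i <;> fin_cases j <;>
        simp [J] <;> omega
    refine ⟨0, m, by omega, Or.inr ⟨by rw [pow_zero, one_mul, hAJ], ?_⟩⟩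
    calc B = (J * J) * B := by rw [JJ, one_mul]
      _ = J * (A * B) := by rw [Matrix.mul_assoc, hAJ]
      _ = J * F ^ m := by rw [h]

theorem factor_of_fib_pow (A B : Matrix (Fin 2) (Fin 2) ℤ)
    (hA : ∀ i j, 0 ≤ A i j) (hB : ∀ i j, 0 ≤ B i j)
    (m : ℕ) (hm : 1 ≤ m) (h : A * B = F ^ m) :
    ∃ k l : ℕ, k + l = m ∧
      ((A = F ^ k ∧ B = F ^ l) ∨ (A = F ^ k * J ∧ B = J * F ^ l)) := by
  exact factor_aux m A B hA hB h
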